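/- Let E be a topological graph that is not topologically free. Then there exist a non-empty open subset V of E⁰ and a positive integer n such that every vertex in V is the base point of a simple loop in Eⁿ without entrances, and σ = r ∘ (d|_{r⁻¹(V)})⁻¹ is a well-defined continuous map V → V with σⁿ = id_V. -/

import Mathlib

open Set Topology

variable {E0 E1 : Type*} [TopologicalSpace E0] [TopologicalSpace E1]

/-- A set is positively invariant if the range of every edge with domain in it lies in it. -/
def PosInv (d r : E1 → E0) (X : Set E0) : Prop := ∀ e : E1, d e ∈ X → r e ∈ X

/-- Sources: `E⁰ \ closure (r (E¹))`. -/
def Sce (r : E1 → E0) : Set E0 := (closure (Set.range r))ᶜ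

/-- Vertices having a neighborhood with compact `r`-preimage. -/
def FinSet (r : E1 → E0) : Set E0 := {v | ∃ V ∈ 𝓝 v, IsCompact (r ⁻¹' V)}

/-- Regular vertices. -/
def Rg (r : E1 → E0) : Set E0 := FinSet r \ closure (Sce r)

/-- Singular vertices. -/
def Sg (r : E1 → E0) : Set E0 := (Rg r)ᶜ

/-- A set is negatively invariant if every regular vertex in it receives an edge from it. -/
def NegInv (d r : E1 → E0) (X : Set E0) : Prop :=
  ∀ v ∈ X ∩ Rg r, ∃ e : E1, r e = v ∧ d e ∈ X

/-- Invariant = positively and negatively invariant. -/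
def Invariant (d r : E1 → E0) (X : Set E0) : Prop := PosInv d r X ∧ NegInv d r X

/-- The chain condition for a finite path `(e 0, e 1, …, e n)` of edges:
`d (e k) = r (e (k+1))`. -/
def IsPath (d r : E1 → E0) {n : ℕ} (e : Fin (n + 1) → E1) : Prop :=
  ∀ i : Fin n, d (e i.castSucc) = r (e i.succ)

/-- The positive orbit `Orb⁺(v)`: ranges of finite paths with domain `v`. -/
def OrbPlus (d r : E1 → E0) (v : E0) : Set E0 :=
  {v} ∪ {w | ∃ n : ℕ, ∃ e : Fin (n + 1) → E1,
    IsPath d r e ∧ d (e (Fin.last n)) = v ∧ r (e 0) = w}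

/-- An infinite path of edges. -/
def IsInfPath (d r : E1 → E0) (e : ℕ → E1) : Prop := ∀ k : ℕ, d (e k) = r (e (k + 1))

/-- `S` is the negative orbit space `Orb⁻(v, e)` of some negative orbit `e` of `v`:
either `v` itself (when `v` is singular), or a finite path ending at a singular vertex
with range `v`, or an infinite path with range `v`. -/
def IsNegOrbitSet (d r : E1 → E0) (v : E0) (S : Set E0) : Prop :=
  (v ∈ Sg r ∧ S = {v}) ∨
  (∃ n : ℕ, ∃ e : Fin (n + 1) → E1, IsPath d r e ∧ r (e 0) = v ∧
    d (e (Fin.last n)) ∈ Sg r ∧ S = insert v (Set.range (d ∘ e))) ∨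
  (∃ e : ℕ → E1, IsInfPath d r e ∧ r (e 0) = v ∧ S = insert v (Set.range (d ∘ e)))

/-- The orbit space `Orb(v, e) = ⋃_{v' ∈ Orb⁻(v,e)} Orb⁺(v')`, expressed in terms of the
negative orbit space `S = Orb⁻(v, e)`. -/
def Orb (d r : E1 → E0) (S : Set E0) : Set E0 := ⋃ v ∈ S, OrbPlus d r v

/-- A maximal head: a non-empty closed invariant set in which any two points can be
approximated by the positive orbit of a common vertex. -/
def MaximalHead (d r : E1 → E0) (X : Set E0) : Prop :=
  X.Nonempty ∧ IsClosed X ∧ Invariant d r X ∧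
  ∀ v1 ∈ X, ∀ v2 ∈ X, ∀ V1 ∈ 𝓝 v1, ∀ V2 ∈ 𝓝 v2,
    ∃ w ∈ X, (OrbPlus d r w ∩ V1).Nonempty ∧ (OrbPlus d r w ∩ V2).Nonempty

/-- Hereditary set: `d (r⁻¹ (V)) ⊆ V`. -/
def Hereditary (d r : E1 → E0) (V : Set E0) : Prop := d '' (r ⁻¹' V) ⊆ V

/-- Saturated set: every regular vertex all of whose received edges have domain in `V`
belongs to `V`. -/
def Saturated (d r : E1 → E0) (V : Set E0) : Prop :=
  ∀ v ∈ Rg r, d '' (r ⁻¹' {v}) ⊆ V → v ∈ V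

/-- `H(V) = ⋃ₙ dⁿ ((rⁿ)⁻¹ (V))`. -/
def HSet (d r : E1 → E0) (V : Set E0) : Set E0 :=
  V ∪ {w | ∃ n : ℕ, ∃ e : Fin (n + 1) → E1,
    IsPath d r e ∧ r (e 0) ∈ V ∧ d (e (Fin.last n)) = w}

/-- The sequence `V₀ = V`, `V_{k+1} = V_k ∪ {v ∈ E⁰_rg : d (r⁻¹ (v)) ⊆ V_k}`. -/
def SatSeq (d r : E1 → E0) (V : Set E0) : ℕ → Set E0
  | 0 => V
  | k + 1 => SatSeq d r V k ∪ {v | v ∈ Rg r ∧ d '' (r ⁻¹' {v}) ⊆ SatSeq d r V k}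

/-- The saturation `S(V) = ⋃ₖ V_k`. -/
def SatSet (d r : E1 → E0) (V : Set E0) : Set E0 := ⋃ k, SatSeq d r V k

/-- Sources of the subgraph on a closed positively invariant set `X`, viewed in `E⁰`:
`X⁰_sce = X⁰ \ closure_{X⁰} (r (X¹))` where `X¹ = d⁻¹ (X⁰)`. -/
def SceIn (d r : E1 → E0) (X : Set E0) : Set E0 := X \ closure (r '' (d ⁻¹' X))

/-- Vertices of the subgraph on `X` having a relative neighborhood with compact
`r`-preimage in `X¹ = d⁻¹(X⁰)`. -/
def FinIn (d r : E1 → E0) (X : Set E0) : Set E0 :=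
  {v | v ∈ X ∧ ∃ V ∈ 𝓝 v, IsCompact (r ⁻¹' (V ∩ X) ∩ d ⁻¹' X)}

/-- Infinite receivers of the subgraph on `X`. -/
def InfIn (d r : E1 → E0) (X : Set E0) : Set E0 := X \ FinIn d r X

/-- Regular vertices of the subgraph on `X`. -/
def RgIn (d r : E1 → E0) (X : Set E0) : Set E0 := FinIn d r X \ closure (SceIn d r X)

/-- Singular vertices of the subgraph on `X`. -/
def SgIn (d r : E1 → E0) (X : Set E0) : Set E0 := X \ RgIn d r X

set_option linter.unusedSectionVars false
namespace Stmt19Aux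

open Function Filter

variable {E0 E1 : Type*} [TopologicalSpace E0] [TopologicalSpace E1]

structure LoopAt (d r : E1 → E0) (E : ℕ → E1) (v : E0) : Prop where
  path : ∀ k, d (E k) = r (E (k + 1))
  noent : ∀ k, ∀ f : E1, r f = r (E k) → f = E k
  base : r (E 0) = v
  per : ∃ q, 0 < q ∧ ∀ k, E (k + q) = E k

def SS (d r : E1 → E0) : Set E0 := {v | ∃ E : ℕ → E1, LoopAt d r E v}

open Classical in
noncomputable def nxt (d r : E1 → E0) : E0 → E0 := fun v =>
  if h : v ∈ SS d r then d (h.choose 0) else v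

variable {d r : E1 → E0}

lemma edge_eq {v : E0} (hv : v ∈ SS d r) {f : E1} (hf : r f = v) : f = hv.choose 0 :=
  hv.choose_spec.noent 0 f (hf.trans hv.choose_spec.base.symm)

lemma nxt_def {v : E0} (hv : v ∈ SS d r) : nxt d r v = d (hv.choose 0) := by
  rw [nxt, dif_pos hv]

lemma d_eq_nxt {f : E1} (hf : r f ∈ SS d r) : d f = nxt d r (r f) := by
  rw [nxt_def hf, ← edge_eq hf rfl]

lemma nxt_eq_of_loop {E : ℕ → E1} {v : E0} (hE : LoopAt d r E v) : nxt d r v = r (E 1) := by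
  have hv : v ∈ SS d r := ⟨E, hE⟩
  rw [nxt_def hv, ← edge_eq hv hE.base, hE.path 0]

lemma LoopAt.shift {E : ℕ → E1} {v : E0} (h : LoopAt d r E v) :
    LoopAt d r (fun k => E (k + 1)) (r (E 1)) := by
  refine ⟨fun k => h.path (k + 1), fun k f hf => h.noent (k + 1) f hf, rfl, ?_⟩
  obtain ⟨q, hq, hper⟩ := h.per
  exact ⟨q, hq, fun k => by simpa [Nat.add_right_comm] using hper (k + 1)⟩

lemma nxt_mem {v : E0} (hv : v ∈ SS d r) : nxt d r v ∈ SS d r := by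
  obtain ⟨E, hE⟩ := hv
  rw [nxt_eq_of_loop hE]
  exact ⟨_, hE.shift⟩

lemma iterate_nxt_mem {v : E0} (hv : v ∈ SS d r) (k : ℕ) : (nxt d r)^[k] v ∈ SS d r := by
  induction k with
  | zero => exact hv
  | succ k ih => rw [Function.iterate_succ_apply']; exact nxt_mem ih

lemma iterate_nxt_of_loop : ∀ (k : ℕ) {E : ℕ → E1} {v : E0}, LoopAt d r E v →
    (nxt d r)^[k] v = r (E k)
  | 0, _, _, hE => hE.base.symm
  | (k + 1), E, v, hE => by
      rw [Function.iterate_succ_apply, nxt_eq_of_loop hE, iterate_nxt_of_loop k hE.shift]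

lemma exists_isPeriodicPt {v : E0} (hv : v ∈ SS d r) :
    ∃ t, 0 < t ∧ Function.IsPeriodicPt (nxt d r) t v := by
  obtain ⟨E, hE⟩ := hv
  obtain ⟨q, hq, hper⟩ := hE.per
  refine ⟨q, hq, ?_⟩
  show (nxt d r)^[q] v = v
  rw [iterate_nxt_of_loop q hE]
  have h0 : E q = E 0 := by simpa using hper 0
  rw [h0, hE.base]

lemma minP_pos {v : E0} (hv : v ∈ SS d r) : 0 < Function.minimalPeriod (nxt d r) v := by
  obtain ⟨t, ht, hp⟩ := exists_isPeriodicPt hv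
  exact hp.minimalPeriod_pos ht

lemma iterate_fixed_of_dvd {x : E0} {m j : ℕ} (h : Function.IsPeriodicPt (nxt d r) m x)
    (hdvd : m ∣ j) : (nxt d r)^[j] x = x := by
  obtain ⟨c, rfl⟩ := hdvd
  exact (h.mul_const c)

lemma minP_eq_of_iterate {z y : E0} {k : ℕ} (hz : z ∈ SS d r) (hk : (nxt d r)^[k] z = y) :
    Function.minimalPeriod (nxt d r) z = Function.minimalPeriod (nxt d r) y := by
  obtain ⟨t, ht, hzp⟩ := exists_isPeriodicPt hz
  have h1 : Function.IsPeriodicPt (nxt d r) (Function.minimalPeriod (nxt d r) z) y := by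
    rw [← hk]
    exact (Function.isPeriodicPt_minimalPeriod (nxt d r) z).apply_iterate k
  have hK : (nxt d r)^[t * k - k] y = z := by
    rw [← hk, ← Function.iterate_add_apply]
    have he : t * k - k + k = t * k := by
      have := Nat.le_mul_of_pos_left k ht
      omega
    rw [he]
    exact (hzp.mul_const k)
  have h2 : Function.IsPeriodicPt (nxt d r) (Function.minimalPeriod (nxt d r) y) z := by
    rw [← hK]
    exact (Function.isPeriodicPt_minimalPeriod (nxt d r) y).apply_iterate _
  exact Nat.dvd_antisymm h2.minimalPeriod_dvd h1.minimalPeriod_dvd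

lemma nxt_mem_interior (hd : IsLocalHomeomorph d) (hr : Continuous r) {v : E0}
    (hv : v ∈ interior (SS d r)) : nxt d r v ∈ interior (SS d r) := by
  have hv' : v ∈ SS d r := interior_subset hv
  obtain ⟨φ, hsrc, hφ⟩ := hd (hv'.choose 0)
  set A := φ.source ∩ r ⁻¹' interior (SS d r) with hA
  have hAopen : IsOpen A := φ.open_source.inter (isOpen_interior.preimage hr)
  have himg : IsOpen (↑φ '' A) := φ.isOpen_image_of_subset_source hAopen inter_subset_left
  have hmem : nxt d r v ∈ ↑φ '' A := by
    refine ⟨hv'.choose 0, ⟨hsrc, ?_⟩, ?_⟩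
    · show r (hv'.choose 0) ∈ interior (SS d r)
      rw [hv'.choose_spec.base]; exact hv
    · rw [← congrFun hφ, ← nxt_def hv']
  have hsub : ↑φ '' A ⊆ SS d r := by
    rintro x ⟨f, ⟨_, hfr⟩, rfl⟩
    have hfS : r f ∈ SS d r := interior_subset hfr
    rw [← congrFun hφ f, d_eq_nxt hfS]
    exact nxt_mem hfS
  exact mem_interior.mpr ⟨↑φ '' A, hsub, himg, hmem⟩

lemma exists_fin_loop {v : E0} (hv : v ∈ SS d r) {p : ℕ}
    (hp : Function.minimalPeriod (nxt d r) v = p) (hp0 : 0 < p) :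
    ∃ e : Fin ((p - 1) + 1) → E1,
      (∀ i : Fin ((p - 1) + 1), d (e i) = r (e (i + 1))) ∧
      Function.Injective (fun i : Fin ((p - 1) + 1) => r (e i)) ∧
      (∀ i : Fin ((p - 1) + 1), ∀ f : E1, r f = r (e i) → f = e i) ∧
      r (e 0) = v := by
  have hp1 : p - 1 + 1 = p := by omega
  have hm : ∀ k : ℕ, (nxt d r)^[k] v ∈ SS d r := fun k => iterate_nxt_mem hv k
  have hper : (nxt d r)^[p] v = v := by
    rw [← hp]; exact Function.iterate_minimalPeriod
  refine ⟨fun i => (hm i.val).choose 0, ?_, ?_, ?_, ?_⟩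
  · intro i
    have hrE : ∀ k : ℕ, r ((hm k).choose 0) = (nxt d r)^[k] v := fun k => (hm k).choose_spec.base
    have hdE : d ((hm i.val).choose 0) = (nxt d r)^[i.val + 1] v := by
      have hfS : r ((hm i.val).choose 0) ∈ SS d r := by rw [hrE i.val]; exact hm i.val
      rw [d_eq_nxt hfS, hrE i.val]
      exact (Function.iterate_succ_apply' (nxt d r) i.val v).symm
    rw [hdE, hrE]
    rcases eq_or_ne i (Fin.last (p - 1)) with h | h
    · have hval : ((i + 1 : Fin (p - 1 + 1))).val = 0 := by
        rw [Fin.val_add_one, if_pos h]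
      rw [hval]
      have : i.val = p - 1 := by rw [h, Fin.val_last]
      rw [this, hp1, hper]
      rfl
    · have hval : ((i + 1 : Fin (p - 1 + 1))).val = i.val + 1 := by
        rw [Fin.val_add_one, if_neg h]
      rw [hval]
  · intro i j hij
    have hrE : ∀ k : ℕ, r ((hm k).choose 0) = (nxt d r)^[k] v := fun k => (hm k).choose_spec.base
    simp only [hrE] at hij
    have hmin : Function.minimalPeriod (nxt d r) v = p := hp
    have := Function.iterate_injOn_Iio_minimalPeriod (f := nxt d r) (x := v)
      (by rw [hmin]; exact mem_Iio.mpr (by omega : i.val < p))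
      (by rw [hmin]; exact mem_Iio.mpr (by omega : j.val < p)) hij
    exact Fin.ext this
  · intro i f hf
    exact edge_eq (hm i.val) (hf.trans (hm i.val).choose_spec.base)
  · simpa using (hm (0 : Fin (p - 1 + 1)).val).choose_spec.base

end Stmt19Aux


theorem stmt19 [LocallyCompactSpace E0] [T2Space E0] [LocallyCompactSpace E1] [T2Space E1]
    (d r : E1 → E0) (hd : IsLocalHomeomorph d) (hr : Continuous r)
    (hnf : interior {v : E0 | ∃ n : ℕ, ∃ e : Fin (n + 1) → E1,
        (∀ i : Fin (n + 1), d (e i) = r (e (i + 1))) ∧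
        (∀ i : Fin (n + 1), ∀ f : E1, r f = r (e i) → f = e i) ∧
        r (e 0) = v} ≠ ∅) :
    ∃ V : Set E0, IsOpen V ∧ V.Nonempty ∧ ∃ n : ℕ,
      (∀ v ∈ V, ∃ e : Fin (n + 1) → E1,
        (∀ i : Fin (n + 1), d (e i) = r (e (i + 1))) ∧
        Function.Injective (fun i : Fin (n + 1) => r (e i)) ∧
        (∀ i : Fin (n + 1), ∀ f : E1, r f = r (e i) → f = e i) ∧
        r (e 0) = v) ∧
      (∀ v ∈ V, ∃! f : E1, r f ∈ V ∧ d f = v) ∧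
      ∃ σ : E0 → E0,
        (∀ v ∈ V, ∀ f : E1, r f ∈ V → d f = v → σ v = r f) ∧
        Set.MapsTo σ V V ∧ ContinuousOn σ V ∧
        ∀ v ∈ V, σ^[n + 1] v = v := by
  classical
  have hWopen : IsOpen (interior (Stmt19Aux.SS d r)) := isOpen_interior
  -- Step 1 : the no-entrance loop set of the hypothesis is contained in (Stmt19Aux.SS d r)
  have hAS : {v : E0 | ∃ n : ℕ, ∃ e : Fin (n + 1) → E1,
      (∀ i : Fin (n + 1), d (e i) = r (e (i + 1))) ∧
      (∀ i : Fin (n + 1), ∀ f : E1, r f = r (e i) → f = e i) ∧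
      r (e 0) = v} ⊆ (Stmt19Aux.SS d r) := by
    rintro v ⟨n, e, hpath, hnoent, hbase⟩
    have hmpos : 0 < n + 1 := Nat.succ_pos n
    refine ⟨fun k => e ⟨k % (n + 1), Nat.mod_lt _ hmpos⟩, ?_, ?_, ?_, ⟨n + 1, hmpos, ?_⟩⟩
    · intro k
      have hstep := hpath ⟨k % (n + 1), Nat.mod_lt _ hmpos⟩
      have hfin : (⟨k % (n + 1), Nat.mod_lt _ hmpos⟩ + 1 : Fin (n + 1)) =
          ⟨(k + 1) % (n + 1), Nat.mod_lt _ hmpos⟩ := by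
        apply Fin.ext
        rw [Fin.val_add_one]
        split_ifs with h
        · have hval : k % (n + 1) = n := by
            have := congrArg Fin.val h
            simpa using this
          show (0 : ℕ) = (k + 1) % (n + 1)
          rw [← Nat.mod_add_mod, hval, Nat.mod_self]
        · have hvne : k % (n + 1) ≠ n := by
            intro hc
            exact h (Fin.ext (by simp [hc]))
          have hvlt : k % (n + 1) < n + 1 := Nat.mod_lt _ hmpos
          show k % (n + 1) + 1 = (k + 1) % (n + 1)
          rw [← Nat.mod_add_mod]
          exact (Nat.mod_eq_of_lt (by omega)).symm
      rw [hstep, hfin]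
    · intro k f hf
      exact hnoent _ f hf
    · show r (e ⟨0 % (n + 1), Nat.mod_lt _ hmpos⟩) = v
      have hfin : (⟨0 % (n + 1), Nat.mod_lt _ hmpos⟩ : Fin (n + 1)) = 0 :=
        Fin.ext (by simp)
      rw [hfin, hbase]
    · intro k
      have hfin : (⟨(k + (n + 1)) % (n + 1), Nat.mod_lt _ hmpos⟩ : Fin (n + 1)) =
          ⟨k % (n + 1), Nat.mod_lt _ hmpos⟩ :=
        Fin.ext (by simpa using Nat.add_mod_right k (n + 1))
      show e ⟨(k + (n + 1)) % (n + 1), Nat.mod_lt _ hmpos⟩ = e ⟨k % (n + 1), Nat.mod_lt _ hmpos⟩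
      rw [hfin]
  -- Step 2 : (interior (Stmt19Aux.SS d r)) is nonempty
  have hWne : (interior (Stmt19Aux.SS d r)).Nonempty := by
    rcases eq_empty_or_nonempty (interior {v : E0 | ∃ n : ℕ, ∃ e : Fin (n + 1) → E1,
        (∀ i : Fin (n + 1), d (e i) = r (e (i + 1))) ∧
        (∀ i : Fin (n + 1), ∀ f : E1, r f = r (e i) → f = e i) ∧
        r (e 0) = v}) with h | h
    · exact absurd h hnf
    · obtain ⟨x, hx⟩ := h
      exact ⟨x, interior_mono hAS hx⟩
  -- Step 3 : Baire category argument
  have hBaire : ∃ p : ℕ, ∃ U : Set E0, IsOpen U ∧ U ⊆ (interior (Stmt19Aux.SS d r)) ∧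
      U ⊆ closure ({y | Function.minimalPeriod (Stmt19Aux.nxt d r) y = p} ∩ (interior (Stmt19Aux.SS d r))) ∧
      ∃ u ∈ U, Function.minimalPeriod (Stmt19Aux.nxt d r) u = p ∧ u ∈ (interior (Stmt19Aux.SS d r)) := by
    set F : ℕ → Set E0 := fun q => closure ({y | Function.minimalPeriod (Stmt19Aux.nxt d r) y = q} ∩ (interior (Stmt19Aux.SS d r))) ∪ (interior (Stmt19Aux.SS d r))ᶜ
      with hF
    have hFclosed : ∀ q, IsClosed (F q) := fun q =>
      isClosed_closure.union hWopen.isClosed_compl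
    have hFcover : ⋃ q, F q = univ := by
      ext x
      simp only [mem_iUnion, mem_univ, iff_true]
      by_cases hx : x ∈ (interior (Stmt19Aux.SS d r))
      · exact ⟨Function.minimalPeriod (Stmt19Aux.nxt d r) x, Or.inl (subset_closure ⟨rfl, hx⟩)⟩
      · exact ⟨0, Or.inr hx⟩
    have hdense := dense_iUnion_interior_of_closed hFclosed hFcover
    obtain ⟨x0, hx0W, hx0U⟩ := hdense.inter_open_nonempty (interior (Stmt19Aux.SS d r)) hWopen hWne
    obtain ⟨p, hx0p⟩ := mem_iUnion.mp hx0U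
    refine ⟨p, (interior (Stmt19Aux.SS d r)) ∩ interior (F p), hWopen.inter isOpen_interior, inter_subset_left, ?_, ?_⟩
    · rintro y ⟨hyW, hyF⟩
      rcases interior_subset hyF with h | h
      · exact h
      · exact absurd hyW h
    · have hx0 : x0 ∈ (interior (Stmt19Aux.SS d r)) ∩ interior (F p) := ⟨hx0W, hx0p⟩
      have hcl : x0 ∈ closure ({y | Function.minimalPeriod (Stmt19Aux.nxt d r) y = p} ∩ (interior (Stmt19Aux.SS d r))) := by
        rcases interior_subset hx0p with h | h
        · exact h
        · exact absurd hx0W h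
      rw [mem_closure_iff] at hcl
      obtain ⟨u, huU, hu1, hu2⟩ := hcl _ (hWopen.inter isOpen_interior) hx0
      exact ⟨u, huU, hu1, hu2⟩
  obtain ⟨p, U, hUopen, hUW, hUsub, u, huU, hup, huW⟩ := hBaire
  have huS : u ∈ (Stmt19Aux.SS d r) := interior_subset huW
  have hppos : 0 < p := hup ▸ Stmt19Aux.minP_pos huS
  -- Step 4 : the cycle of u stays in (interior (Stmt19Aux.SS d r))
  have hWinv : ∀ w ∈ (interior (Stmt19Aux.SS d r)), (Stmt19Aux.nxt d r) w ∈ (interior (Stmt19Aux.SS d r)) := fun w hw => Stmt19Aux.nxt_mem_interior hd hr hw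
  have huiW : ∀ i : ℕ, (Stmt19Aux.nxt d r)^[i] u ∈ (interior (Stmt19Aux.SS d r)) := by
    intro i
    induction i with
    | zero => exact huW
    | succ i ih => rw [Function.iterate_succ_apply']; exact hWinv _ ih
  have huiS : ∀ i : ℕ, (Stmt19Aux.nxt d r)^[i] u ∈ (Stmt19Aux.SS d r) := fun i => interior_subset (huiW i)
  -- Step 5 : choose loops and charts along the cycle of u
  have hexE : ∀ i : ℕ, ∃ E : ℕ → E1, Stmt19Aux.LoopAt d r E ((Stmt19Aux.nxt d r)^[i] u) := fun i => huiS i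
  choose EL hEL using hexE
  have hredge : ∀ i, r (EL i 0) = (Stmt19Aux.nxt d r)^[i] u := fun i => (hEL i).base
  have hdedge : ∀ i, d (EL i 0) = (Stmt19Aux.nxt d r)^[i + 1] u := by
    intro i
    have h1 : r (EL i 0) ∈ (Stmt19Aux.SS d r) := by rw [hredge i]; exact huiS i
    rw [Stmt19Aux.d_eq_nxt h1, hredge i]
    exact (Function.iterate_succ_apply' (Stmt19Aux.nxt d r) i u).symm
  have hch : ∀ i : ℕ, ∃ φ : OpenPartialHomeomorph E1 E0, EL i 0 ∈ φ.source ∧ d = φ :=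
    fun i => hd (EL i 0)
  choose Φ hΦs hΦd using hch
  obtain ⟨σf, hσf⟩ : ∃ σf : ℕ → E0 → E0, ∀ i x, σf i x = r ((Φ i).symm x) :=
    ⟨fun i x => r ((Φ i).symm x), fun _ _ => rfl⟩
  have hσcont : ∀ i, ContinuousOn (σf i) (Φ i).target := fun i =>
    (hr.comp_continuousOn (Φ i).continuousOn_symm).congr fun x _ => hσf i x
  have hsec : ∀ i x, x ∈ (Φ i).target → d ((Φ i).symm x) = x := by
    intro i x hx
    rw [congrFun (hΦd i) _]
    exact (Φ i).right_inv hx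
  have htarget : ∀ i, (Stmt19Aux.nxt d r)^[i + 1] u ∈ (Φ i).target := by
    intro i
    rw [← hdedge i, congrFun (hΦd i)]
    exact (Φ i).map_source (hΦs i)
  have hσu : ∀ i, σf i ((Stmt19Aux.nxt d r)^[i + 1] u) = (Stmt19Aux.nxt d r)^[i] u := by
    intro i
    have h1 : (Φ i).symm ((Stmt19Aux.nxt d r)^[i + 1] u) = EL i 0 := by
      rw [← hdedge i, congrFun (hΦd i)]
      exact (Φ i).left_inv (hΦs i)
    rw [hσf, h1, hredge i]
  -- Step 6 : the telescope of neighborhoods Ω i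
  obtain ⟨Ω, hΩ0, hΩs⟩ : ∃ Ω : ℕ → Set E0, Ω 0 = U ∧
      ∀ i, Ω (i + 1) = (interior (Stmt19Aux.SS d r)) ∩ ((Φ i).target ∩ σf i ⁻¹' Ω i) :=
    ⟨fun i => Nat.rec U (fun i Ωi => (interior (Stmt19Aux.SS d r)) ∩ ((Φ i).target ∩ σf i ⁻¹' Ωi)) i, rfl, fun _ => rfl⟩
  have hΩW : ∀ i, Ω i ⊆ (interior (Stmt19Aux.SS d r)) := by
    intro i
    cases i with
    | zero => rw [hΩ0]; exact hUW
    | succ i => rw [hΩs]; exact inter_subset_left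
  have hΩS : ∀ i, Ω i ⊆ (Stmt19Aux.SS d r) := fun i => (hΩW i).trans interior_subset
  have hΩopen : ∀ i, IsOpen (Ω i) := by
    intro i
    induction i with
    | zero => rw [hΩ0]; exact hUopen
    | succ i ih =>
      rw [hΩs]
      exact hWopen.inter ((hσcont i).isOpen_inter_preimage (Φ i).open_target ih)
  have hΩu : ∀ i, (Stmt19Aux.nxt d r)^[i] u ∈ Ω i := by
    intro i
    induction i with
    | zero => rw [hΩ0]; exact huU
    | succ i ih =>
      rw [hΩs]
      exact ⟨huiW (i + 1), htarget i, by rw [mem_preimage, hσu i]; exact ih⟩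
  have hΩtarget : ∀ i, Ω (i + 1) ⊆ (Φ i).target := by
    intro i x hx
    rw [hΩs] at hx
    exact hx.2.1
  have hstep : ∀ i, ∀ x ∈ Ω (i + 1), σf i x ∈ Ω i ∧ (Stmt19Aux.nxt d r) (σf i x) = x := by
    intro i x hx
    rw [hΩs] at hx
    obtain ⟨hxW, hxT, hxP⟩ := hx
    refine ⟨hxP, ?_⟩
    have h1 : d ((Φ i).symm x) = x := hsec i x hxT
    have h2 : r ((Φ i).symm x) ∈ (Stmt19Aux.SS d r) := by
      rw [← hσf]; exact hΩS i hxP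
    have h3 := Stmt19Aux.d_eq_nxt h2
    rw [hσf, ← h3, h1]
  -- Step 7 : the chain maps χ
  obtain ⟨χ, hχ0, hχs⟩ : ∃ χ : ℕ → E0 → E0, χ 0 = id ∧
      ∀ j, χ (j + 1) = fun x => σf (p - 1 - j) (χ j x) :=
    ⟨fun j => Nat.rec id (fun j χj x => σf (p - 1 - j) (χj x)) j, rfl, fun _ => rfl⟩
  have hχmem : ∀ j, j ≤ p → ∀ x ∈ Ω p, χ j x ∈ Ω (p - j) ∧ (Stmt19Aux.nxt d r)^[j] (χ j x) = x := by
    intro j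
    induction j with
    | zero => intro _ x hx; rw [hχ0]; exact ⟨by simpa using hx, rfl⟩
    | succ j ih =>
      intro hj x hx
      obtain ⟨h1, h2⟩ := ih (Nat.le_of_succ_le hj) x hx
      have heq : p - j = (p - 1 - j) + 1 := by omega
      rw [heq] at h1
      obtain ⟨h3, h4⟩ := hstep (p - 1 - j) _ h1
      have hj1 : p - (j + 1) = p - 1 - j := by omega
      rw [hχs j]
      refine ⟨by rw [hj1]; exact h3, ?_⟩
      show (Stmt19Aux.nxt d r)^[j + 1] (σf (p - 1 - j) (χ j x)) = x
      rw [Function.iterate_succ_apply, h4, h2]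
  have hχcont : ∀ j, j ≤ p → ContinuousOn (χ j) (Ω p) := by
    intro j
    induction j with
    | zero => intro _; rw [hχ0]; exact continuousOn_id
    | succ j ih =>
      intro hj
      rw [hχs j]
      refine ContinuousOn.comp (hσcont (p - 1 - j)) (ih (Nat.le_of_succ_le hj)) ?_
      intro x hx
      have h1 := (hχmem j (Nat.le_of_succ_le hj) x hx).1
      have heq : p - j = (p - 1 - j) + 1 := by omega
      rw [heq] at h1
      exact hΩtarget _ h1
  have hχu : ∀ j, j ≤ p → χ j u = (Stmt19Aux.nxt d r)^[p - j] u := by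
    intro j
    induction j with
    | zero =>
      intro _
      rw [hχ0, Nat.sub_zero]
      show u = (Stmt19Aux.nxt d r)^[p] u
      rw [← hup]
      exact Function.iterate_minimalPeriod.symm
    | succ j ih =>
      intro hj
      rw [hχs j]
      show σf (p - 1 - j) (χ j u) = (Stmt19Aux.nxt d r)^[p - (j + 1)] u
      rw [ih (Nat.le_of_succ_le hj)]
      have heq : p - j = (p - 1 - j) + 1 := by omega
      have hj1 : p - (j + 1) = p - 1 - j := by omega
      rw [heq, hσu (p - 1 - j), hj1]
  -- Step 8 : the descent maps ξ
  obtain ⟨ξ, hξ0, hξs⟩ : ∃ ξ : ℕ → E0 → E0, ξ 0 = id ∧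
      ∀ i, ξ (i + 1) = fun x => ξ i (σf i x) :=
    ⟨fun i => Nat.rec id (fun i ξi x => ξi (σf i x)) i, rfl, fun _ => rfl⟩
  have hξmem : ∀ i, ∀ x ∈ Ω i, ξ i x ∈ Ω 0 ∧ (Stmt19Aux.nxt d r)^[i] (ξ i x) = x := by
    intro i
    induction i with
    | zero => intro x hx; rw [hξ0]; exact ⟨hx, rfl⟩
    | succ i ih =>
      intro x hx
      obtain ⟨h1, h2⟩ := hstep i x hx
      obtain ⟨h3, h4⟩ := ih _ h1
      rw [hξs i]
      refine ⟨h3, ?_⟩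
      show (Stmt19Aux.nxt d r)^[i + 1] (ξ i (σf i x)) = x
      rw [Function.iterate_succ_apply', h4, h2]
  have hξcont : ∀ i, ContinuousOn (ξ i) (Ω i) := by
    intro i
    induction i with
    | zero => rw [hξ0]; exact continuousOn_id
    | succ i ih =>
      rw [hξs i]
      exact ContinuousOn.comp ih ((hσcont i).mono (hΩtarget i))
        (fun x hx => (hstep i x hx).1)
  have hξχ : ∀ j, j ≤ p → ∀ x ∈ Ω p, ξ (p - j) (χ j x) = ξ p x := by
    intro j
    induction j with
    | zero => intro _ x _; rw [hχ0, Nat.sub_zero]; rfl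
    | succ j ih =>
      intro hj x hx
      have heq : p - j = (p - 1 - j) + 1 := by omega
      have hj1 : p - (j + 1) = p - 1 - j := by omega
      rw [hχs j, hj1]
      have h2 : ξ ((p - 1 - j) + 1) (χ j x) = ξ (p - 1 - j) (σf (p - 1 - j) (χ j x)) := by
        rw [hξs]
      rw [← h2, ← heq]
      exact ih (Nat.le_of_succ_le hj) x hx
  -- Step 9 : χ p is the identity on Ω p ∩ U by density
  have hGid : ∀ x ∈ Ω p ∩ U, χ p x = x := by
    rintro x ⟨hxΩ, hxU⟩
    set sDen := ({y | Function.minimalPeriod (Stmt19Aux.nxt d r) y = p} ∩ (interior (Stmt19Aux.SS d r))) ∩ (Ω p ∩ U) with hsDen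
    have hxcl : x ∈ closure sDen := by
      have h1 : x ∈ (Ω p ∩ U) ∩ closure ({y | Function.minimalPeriod (Stmt19Aux.nxt d r) y = p} ∩ (interior (Stmt19Aux.SS d r))) :=
        ⟨⟨hxΩ, hxU⟩, hUsub hxU⟩
      have h2 := ((hΩopen p).inter hUopen).inter_closure h1
      refine closure_mono ?_ h2
      rintro z ⟨hz1, hz2⟩
      exact ⟨hz2, hz1⟩
    haveI hNe : (𝓝[sDen] x).NeBot := mem_closure_iff_nhdsWithin_neBot.mp hxcl
    have hcAt : ContinuousAt (χ p) x :=
      (hχcont p le_rfl).continuousAt ((hΩopen p).mem_nhds hxΩ)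
    have hEqOn : ∀ y ∈ sDen, χ p y = y := by
      rintro y ⟨⟨hyp, hyW⟩, hyΩ, hyU⟩
      obtain ⟨hy1, hy2⟩ := hχmem p le_rfl y hyΩ
      have hzS : χ p y ∈ (Stmt19Aux.SS d r) := by
        rw [Nat.sub_self] at hy1
        exact hΩS 0 hy1
      have hmm := Stmt19Aux.minP_eq_of_iterate hzS hy2
      have hfix : (Stmt19Aux.nxt d r)^[p] (χ p y) = χ p y := by
        have h5 := Function.isPeriodicPt_minimalPeriod (Stmt19Aux.nxt d r) (χ p y)
        rw [hmm, hyp] at h5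
        exact h5
      exact hfix.symm.trans hy2
    have t1 : Filter.Tendsto (χ p) (𝓝[sDen] x) (𝓝 (χ p x)) :=
      hcAt.tendsto.mono_left nhdsWithin_le_nhds
    have t2 : Filter.Tendsto (χ p) (𝓝[sDen] x) (𝓝 x) := by
      have hEv : (fun y => y) =ᶠ[𝓝[sDen] x] (χ p) := by
        filter_upwards [self_mem_nhdsWithin] with y hy
        exact (hEqOn y hy).symm
      exact Filter.Tendsto.congr' hEv (Filter.tendsto_id.mono_left nhdsWithin_le_nhds)
    exact (tendsto_nhds_unique t1 t2)
  have hper : ∀ x ∈ Ω p ∩ U, (Stmt19Aux.nxt d r)^[p] x = x := by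
    intro x hx
    have h1 := (hχmem p le_rfl x hx.1).2
    rw [hGid x hx] at h1
    exact h1
  -- Step 10 : the open set V0 of points of exact period p
  obtain ⟨V0, hV0def⟩ : ∃ V0 : Set E0,
      V0 = (Ω p ∩ U) ∩ ⋂ j ∈ Finset.Ico 1 p, {x | x ∈ Ω p ∧ χ j x ≠ x} := ⟨_, rfl⟩
  have hV0open : IsOpen V0 := by
    rw [hV0def]
    refine ((hΩopen p).inter hUopen).inter (isOpen_biInter_finset ?_)
    intro j hj
    rw [Finset.mem_Ico] at hj
    have hcont : ContinuousOn (fun x => (χ j x, x)) (Ω p) :=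
      (hχcont j (le_of_lt hj.2)).prodMk continuousOn_id
    have hset : {x | x ∈ Ω p ∧ χ j x ≠ x} =
        Ω p ∩ (fun x => (χ j x, x)) ⁻¹' (Set.diagonal E0)ᶜ := by
      ext x
      simp only [mem_setOf_eq, mem_inter_iff, mem_preimage, mem_compl_iff,
        Set.mem_diagonal_iff]
    rw [hset]
    exact hcont.isOpen_inter_preimage (hΩopen p) isClosed_diagonal.isOpen_compl
  have huΩp : u ∈ Ω p := by
    have := hΩu p
    rwa [← hup, Function.iterate_minimalPeriod, hup] at this
  have huV0 : u ∈ V0 := by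
    rw [hV0def]
    refine ⟨⟨huΩp, huU⟩, ?_⟩
    rw [mem_iInter₂]
    intro j hj
    rw [Finset.mem_Ico] at hj
    refine ⟨huΩp, ?_⟩
    rw [hχu j (le_of_lt hj.2)]
    intro hc
    have h0 : (Stmt19Aux.nxt d r)^[p - j] u = (Stmt19Aux.nxt d r)^[0] u := hc
    have hinj := Function.iterate_injOn_Iio_minimalPeriod (f := (Stmt19Aux.nxt d r)) (x := u)
      (by rw [hup]; exact mem_Iio.mpr (by omega)) (by rw [hup]; exact mem_Iio.mpr hppos) h0
    omega
  have hV0per : ∀ x ∈ V0, Function.minimalPeriod (Stmt19Aux.nxt d r) x = p := by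
    intro x hx
    rw [hV0def] at hx
    obtain ⟨⟨hxΩ, hxU⟩, hxI⟩ := hx
    have hxS : x ∈ (Stmt19Aux.SS d r) := hΩS p hxΩ
    have hfix : Function.IsPeriodicPt (Stmt19Aux.nxt d r) p x := hper x ⟨hxΩ, hxU⟩
    have hdvd : Function.minimalPeriod (Stmt19Aux.nxt d r) x ∣ p := hfix.minimalPeriod_dvd
    by_contra hne
    have hqpos : 0 < Function.minimalPeriod (Stmt19Aux.nxt d r) x := Stmt19Aux.minP_pos hxS
    have hlt : Function.minimalPeriod (Stmt19Aux.nxt d r) x < p :=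
      lt_of_le_of_ne (Nat.le_of_dvd hppos hdvd) hne
    have hj : p - Function.minimalPeriod (Stmt19Aux.nxt d r) x ∈ Finset.Ico 1 p :=
      Finset.mem_Ico.mpr ⟨by omega, by omega⟩
    obtain ⟨hz1, hz2⟩ := hχmem (p - Function.minimalPeriod (Stmt19Aux.nxt d r) x) (by omega) x hxΩ
    have hzS : χ (p - Function.minimalPeriod (Stmt19Aux.nxt d r) x) x ∈ (Stmt19Aux.SS d r) := hΩS _ hz1
    have hminP := Stmt19Aux.minP_eq_of_iterate hzS hz2
    have hzfix : (Stmt19Aux.nxt d r)^[p - Function.minimalPeriod (Stmt19Aux.nxt d r) x]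
        (χ (p - Function.minimalPeriod (Stmt19Aux.nxt d r) x) x) = χ (p - Function.minimalPeriod (Stmt19Aux.nxt d r) x) x := by
      have hz3 : Function.IsPeriodicPt (Stmt19Aux.nxt d r)
          (Function.minimalPeriod (Stmt19Aux.nxt d r) x)
          (χ (p - Function.minimalPeriod (Stmt19Aux.nxt d r) x) x) := by
        have h6 := Function.isPeriodicPt_minimalPeriod (Stmt19Aux.nxt d r)
          (χ (p - Function.minimalPeriod (Stmt19Aux.nxt d r) x) x)
        rwa [hminP] at h6
      exact Stmt19Aux.iterate_fixed_of_dvd hz3 (Nat.dvd_sub hdvd dvd_rfl)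
    have hcontra : χ (p - Function.minimalPeriod (Stmt19Aux.nxt d r) x) x = x := hzfix.symm.trans hz2
    exact (mem_iInter₂.mp hxI _ hj).2 hcontra
  -- Step 11 : the pieces T j and the final open set V
  obtain ⟨T, hTdef⟩ : ∃ T : ℕ → Set E0,
      T = fun j => Ω (p - j) ∩ ξ (p - j) ⁻¹' V0 := ⟨_, rfl⟩
  have hTopen : ∀ j, IsOpen (T j) := by
    intro j
    simp only [hTdef]
    exact (hξcont _).isOpen_inter_preimage (hΩopen _) hV0open
  have hV0T0 : V0 ⊆ T 0 := by
    intro x hx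
    have hxΩU : x ∈ Ω p ∩ U := by rw [hV0def] at hx; exact hx.1
    simp only [hTdef]
    refine ⟨by rw [Nat.sub_zero]; exact hxΩU.1, ?_⟩
    show ξ (p - 0) x ∈ V0
    have h1 : ξ p x = χ p x := by
      have := hξχ p le_rfl x hxΩU.1
      rw [Nat.sub_self, hξ0] at this
      exact this.symm
    rw [Nat.sub_zero, h1, hGid x hxΩU]
    exact hx
  obtain ⟨V, hVdef⟩ : ∃ V : Set E0, V = ⋃ j ∈ Finset.range p, T j := ⟨_, rfl⟩
  have hVopen : IsOpen V := by
    rw [hVdef]; exact isOpen_biUnion fun j _ => hTopen j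
  have hVmem : ∀ x, x ∈ V ↔ ∃ j, j < p ∧ x ∈ T j := by
    intro x
    rw [hVdef]
    simp only [mem_iUnion, Finset.mem_range, exists_prop]
  have hVne : V.Nonempty :=
    ⟨u, (hVmem u).mpr ⟨0, hppos, hV0T0 huV0⟩⟩
  have hTW : ∀ j, T j ⊆ (interior (Stmt19Aux.SS d r)) := by
    intro j x hx
    simp only [hTdef] at hx
    exact hΩW _ hx.1
  have hVW : V ⊆ (interior (Stmt19Aux.SS d r)) := by
    intro x hx
    obtain ⟨j, _, hxT⟩ := (hVmem x).mp hx
    exact hTW j hxT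
  have hTp0 : T p ⊆ T 0 := by
    intro x hx
    simp only [hTdef, Nat.sub_self] at hx
    obtain ⟨hx1, hx2⟩ := hx
    rw [hξ0] at hx2
    exact hV0T0 hx2
  -- Step 12 : every point of V has exact period p
  have hVfacts : ∀ x ∈ V, Function.minimalPeriod (Stmt19Aux.nxt d r) x = p ∧ (Stmt19Aux.nxt d r)^[p] x = x := by
    intro x hx
    obtain ⟨j, hj, hxT⟩ := (hVmem x).mp hx
    simp only [hTdef] at hxT
    obtain ⟨hx1, hx2⟩ := hxT
    obtain ⟨hy1, hy2⟩ := hξmem (p - j) x hx1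
    have hyV0 : ξ (p - j) x ∈ V0 := hx2
    have hyS : ξ (p - j) x ∈ (Stmt19Aux.SS d r) := by
      rw [hV0def] at hyV0
      exact hΩS p hyV0.1.1
    have h1 := Stmt19Aux.minP_eq_of_iterate hyS hy2
    have h2 : Function.minimalPeriod (Stmt19Aux.nxt d r) x = p := by
      rw [← h1]
      exact hV0per _ hyV0
    refine ⟨h2, ?_⟩
    rw [← h2]
    exact Function.iterate_minimalPeriod
  -- Step 13 : the canonical edge into each point of V
  have hVstep : ∀ j, j < p → ∀ x ∈ T j, ∃ f : E1, d f = x ∧ r f = σf (p - 1 - j) x ∧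
      σf (p - 1 - j) x ∈ T (j + 1) ∧ (Stmt19Aux.nxt d r) (σf (p - 1 - j) x) = x := by
    intro j hj x hx
    simp only [hTdef] at hx
    obtain ⟨hx1, hx2⟩ := hx
    have heq : p - j = (p - 1 - j) + 1 := by omega
    have hj1 : p - (j + 1) = p - 1 - j := by omega
    rw [heq] at hx1
    have hxT : x ∈ (Φ (p - 1 - j)).target := hΩtarget _ hx1
    obtain ⟨hs1, hs2⟩ := hstep (p - 1 - j) x hx1
    refine ⟨(Φ (p - 1 - j)).symm x, hsec _ x hxT, (hσf _ x).symm, ?_, hs2⟩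
    simp only [hTdef]
    refine ⟨by rw [hj1]; exact hs1, ?_⟩
    show ξ (p - (j + 1)) (σf (p - 1 - j) x) ∈ V0
    rw [hj1]
    have h2 : ξ ((p - 1 - j) + 1) x = ξ (p - 1 - j) (σf (p - 1 - j) x) := by rw [hξs]
    rw [← h2, ← heq]
    exact hx2
  have hTV : ∀ j, j ≤ p → T j ⊆ V := by
    intro j hj x hx
    rcases lt_or_eq_of_le hj with h | h
    · exact (hVmem x).mpr ⟨j, h, hx⟩
    · subst h
      exact (hVmem x).mpr ⟨0, hppos, hTp0 hx⟩
  -- Step 14 : uniqueness of the edge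
  have hUniq : ∀ f : E1, r f ∈ V → ∀ g : E1, r g ∈ V → d f = d g → f = g := by
    intro f hf g hg hdfg
    have hfS : r f ∈ (Stmt19Aux.SS d r) := interior_subset (hVW hf)
    have hgS : r g ∈ (Stmt19Aux.SS d r) := interior_subset (hVW hg)
    have hpf := (hVfacts _ hf).2
    have hpg := (hVfacts _ hg).2
    have hrfg : r f = r g := by
      have e1 : (Stmt19Aux.nxt d r)^[p - 1] ((Stmt19Aux.nxt d r) (r f)) = r f := by
        have h := hpf
        rw [show p = p - 1 + 1 by omega, Function.iterate_succ_apply] at h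
        exact h
      have e2 : (Stmt19Aux.nxt d r)^[p - 1] ((Stmt19Aux.nxt d r) (r g)) = r g := by
        have h := hpg
        rw [show p = p - 1 + 1 by omega, Function.iterate_succ_apply] at h
        exact h
      have hnf' : (Stmt19Aux.nxt d r) (r f) = d f := (Stmt19Aux.d_eq_nxt hfS).symm
      have hng' : (Stmt19Aux.nxt d r) (r g) = d g := (Stmt19Aux.d_eq_nxt hgS).symm
      rw [← e1, ← e2, hnf', hng', hdfg]
    have h1 : f = hfS.choose 0 := Stmt19Aux.edge_eq hfS rfl
    have h2 : g = hfS.choose 0 := Stmt19Aux.edge_eq hfS hrfg.symm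
    rw [h1, h2]
  -- Step 15 : the map σ
  obtain ⟨σ, hσdef⟩ : ∃ σ : E0 → E0, ∀ x, σ x =
      if h : ∃ f : E1, r f ∈ V ∧ d f = x then r h.choose else x :=
    ⟨_, fun _ => rfl⟩
  have hσspec : ∀ v ∈ V, ∀ f : E1, r f ∈ V → d f = v → σ v = r f := by
    intro v hv f hf hdf
    have hex : ∃ f : E1, r f ∈ V ∧ d f = v := ⟨f, hf, hdf⟩
    rw [hσdef, dif_pos hex]
    have := hUniq _ hex.choose_spec.1 f hf (hex.choose_spec.2.trans hdf.symm)
    rw [this]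
  have hσT : ∀ j, j < p → ∀ x ∈ T j, σ x = σf (p - 1 - j) x ∧ σ x ∈ V ∧ (Stmt19Aux.nxt d r) (σ x) = x := by
    intro j hj x hx
    have hxV : x ∈ V := hTV j (le_of_lt hj) hx
    obtain ⟨f, hdf, hrf, hmemT, hnx⟩ := hVstep j hj x hx
    have hrfV : r f ∈ V := by rw [hrf]; exact hTV (j + 1) hj hmemT
    have hσx : σ x = σf (p - 1 - j) x := by rw [hσspec x hxV f hrfV hdf, hrf]
    refine ⟨hσx, ?_, ?_⟩
    · rw [hσx]; exact hTV (j + 1) hj hmemT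
    · rw [hσx]; exact hnx
  have hσV : ∀ x ∈ V, σ x ∈ V ∧ (Stmt19Aux.nxt d r) (σ x) = x := by
    intro x hx
    obtain ⟨j, hj, hxT⟩ := (hVmem x).mp hx
    obtain ⟨_, h2, h3⟩ := hσT j hj x hxT
    exact ⟨h2, h3⟩
  -- Step 16 : continuity of σ on V
  have hσcontV : ContinuousOn σ V := by
    intro x hx
    obtain ⟨j, hj, hxT⟩ := (hVmem x).mp hx
    have hTsub : T j ⊆ (Φ (p - 1 - j)).target := by
      intro y hy
      simp only [hTdef] at hy
      have := hy.1
      rw [(by omega : p - j = (p - 1 - j) + 1)] at this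
      exact hΩtarget _ this
    have hcA : ContinuousAt (σf (p - 1 - j)) x :=
      (hσcont (p - 1 - j)).continuousAt
        (Filter.mem_of_superset ((hTopen j).mem_nhds hxT) hTsub)
    have hEv : σf (p - 1 - j) =ᶠ[𝓝 x] σ := by
      filter_upwards [(hTopen j).mem_nhds hxT] with y hy
      exact ((hσT j hj y hy).1).symm
    exact (hcA.congr hEv).continuousWithinAt
  -- Step 17 : σ^[p] = id on V
  have hiter : ∀ k, ∀ v ∈ V, σ^[k] v ∈ V ∧ (Stmt19Aux.nxt d r)^[k] (σ^[k] v) = v := by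
    intro k
    induction k with
    | zero => exact fun v hv => ⟨hv, rfl⟩
    | succ k ih =>
      intro v hv
      obtain ⟨h1, h2⟩ := hσV v hv
      obtain ⟨h3, h4⟩ := ih (σ v) h1
      rw [Function.iterate_succ_apply]
      refine ⟨h3, ?_⟩
      rw [Function.iterate_succ_apply', h4, h2]
  have hσp : ∀ v ∈ V, σ^[p] v = v := by
    intro v hv
    obtain ⟨h1, h2⟩ := hiter p v hv
    have h3 := (hVfacts _ h1).2
    rw [h3] at h2
    exact h2
  -- Conclusion
  refine ⟨V, hVopen, hVne, p - 1, ?_, ?_, σ, ?_, ?_, ?_, ?_⟩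
  · intro v hv
    have hvS : v ∈ (Stmt19Aux.SS d r) := interior_subset (hVW hv)
    exact Stmt19Aux.exists_fin_loop hvS (hVfacts v hv).1 hppos
  · intro v hv
    obtain ⟨j, hj, hxT⟩ := (hVmem v).mp hv
    obtain ⟨f, hdf, hrf, hmemT, _⟩ := hVstep j hj v hxT
    refine ⟨f, ⟨by rw [hrf]; exact hTV (j + 1) hj hmemT, hdf⟩, ?_⟩
    rintro g ⟨hg1, hg2⟩
    have hfV : r f ∈ V := by rw [hrf]; exact hTV (j + 1) hj hmemT
    exact hUniq g hg1 f hfV (hg2.trans hdf.symm)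
  · exact hσspec
  · exact fun x hx => (hσV x hx).1
  · exact hσcontV
  · intro v hv
    rw [(by omega : p - 1 + 1 = p)]
    exact hσp v hv
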